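/- Let V ∈ ℂ[q₁,…,qₙ] be a homogeneous polynomial of degree k > 2 that has no improper Darboux points, i.e. V′(d) = 0 implies d = 0. Then V has only finitely many Darboux points: the image in the projective space ℙ^{n−1}(ℂ) of the set {d ∈ ℂⁿ ∖ {0} : d ∧ V′(d) = 0} is a finite set; equivalently, the set S := {d ∈ ℂⁿ ∖ {0} : V′(d) = d} of normalized representatives is finite and meets every projective Darboux point. -/

import Mathlib

open MvPolynomial

/-- The gradient of a multivariate polynomial, evaluated at a point. -/
noncomputable def grad {n : ℕ} (V : MvPolynomial (Fin n) ℂ) (d : Fin n → ℂ) : Fin n → ℂ :=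
  fun i => eval d (pderiv i V)

lemma aux_pderiv_homog {n k : ℕ} {V : MvPolynomial (Fin n) ℂ} (hV : V.IsHomogeneous k)
    (i : Fin n) : (pderiv i V).IsHomogeneous (k - 1) := by
  rw [V.as_sum, map_sum]
  apply IsHomogeneous.sum
  intro s hs
  rw [pderiv_monomial]
  rcases Nat.eq_zero_or_pos (s i) with h0 | hpos
  · rw [h0]; simp [isHomogeneous_zero]
  · apply isHomogeneous_monomial
    have hdeg : s.degree = k := by
      rw [Finsupp.degree_eq_weight_one]; exact hV (mem_support_iff.mp hs)
    have heq : (s - Finsupp.single i 1) + Finsupp.single i 1 = s := by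
      ext j
      rcases eq_or_ne j i with rfl | hji
      · simp [Finsupp.sub_apply]; omega
      · simp [Finsupp.sub_apply, Finsupp.single_apply, Ne.symm hji]
    have h2 : (s - Finsupp.single i 1).degree + 1 = k := by
      have h3 := congrArg Finsupp.degree heq
      rw [Finsupp.degree_eq_weight_one] at h3 ⊢
      simp only [map_add] at h3
      rw [← hdeg, Finsupp.degree_eq_weight_one, ← h3]
      congr 1
      simp [Finsupp.weight_apply]
    omega

lemma aux_eval_smul {n m : ℕ} {φ : MvPolynomial (Fin n) ℂ} (hφ : φ.IsHomogeneous m)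
    (c : ℂ) (x : Fin n → ℂ) : eval (fun i => c * x i) φ = c ^ m * eval x φ := by
  conv_lhs => rw [φ.as_sum]
  conv_rhs => rw [φ.as_sum]
  rw [map_sum, map_sum, Finset.mul_sum]
  apply Finset.sum_congr rfl
  intro s hs
  rw [eval_monomial, eval_monomial]
  have hdeg : s.degree = m := by
    rw [Finsupp.degree_eq_weight_one]; exact hφ (mem_support_iff.mp hs)
  have : (s.prod fun i e => (c * x i) ^ e) = c ^ m * s.prod fun i e => (x i) ^ e := by
    rw [← hdeg]
    simp_rw [mul_pow]
    rw [Finsupp.prod_mul]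
    congr 1
    rw [Finsupp.prod, Finsupp.degree, Finset.prod_pow_eq_pow_sum]
    rfl
  rw [this]; ring

lemma aux_hc_mul {n : ℕ} (h g : MvPolynomial (Fin n) ℂ) {m N : ℕ}
    (hg : g.IsHomogeneous m) (hm : m ≤ N) :
    homogeneousComponent N (h * g) = homogeneousComponent (N - m) h * g := by
  conv_lhs => rw [← sum_homogeneousComponent h, Finset.sum_mul, map_sum]
  have key : ∀ d : ℕ, homogeneousComponent N (homogeneousComponent d h * g)
      = if d = N - m then homogeneousComponent d h * g else 0 := by
    intro d
    have hmem : homogeneousComponent d h * g ∈ homogeneousSubmodule (Fin n) ℂ (d + m) := by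
      rw [mem_homogeneousSubmodule]
      exact (homogeneousComponent_isHomogeneous d h).mul hg
    rw [homogeneousComponent_of_mem hmem]
    congr 1
    simp only [eq_iff_iff]; omega
  simp_rw [key]
  rw [Finset.sum_ite_eq' (Finset.range (h.totalDegree + 1)) (N - m)
    (fun d => homogeneousComponent d h * g)]
  split_ifs with hin
  · rfl
  · rw [Finset.mem_range, not_lt] at hin
    rw [homogeneousComponent_eq_zero _ _ (by omega), zero_mul]

lemma aux_totalDegree_le {n m : ℕ} {φ : MvPolynomial (Fin n) ℂ} (hφ : φ.IsHomogeneous m) :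
    φ.totalDegree ≤ m := by
  rcases eq_or_ne φ 0 with rfl | h
  · simp
  · exact le_of_eq (hφ.totalDegree h)

/-- If a homogeneous potential `V` of degree `k > 2` has no improper Darboux points
(`V'(d) = 0 ⟹ d = 0`), then it has only finitely many Darboux points: the image in
`ℙⁿ⁻¹(ℂ)` of `{d ≠ 0 : d ∧ V'(d) = 0}` is finite; equivalently, the set
`S = {d ≠ 0 : V'(d) = d}` of normalized representatives is finite and meets every
projective Darboux point. -/
theorem stmt15 {n k : ℕ} (hk : 2 < k)
    (V : MvPolynomial (Fin n) ℂ) (hV : V.IsHomogeneous k)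
    (hproper : ∀ d : Fin n → ℂ, grad V d = 0 → d = 0) :
    Set.Finite {p : Projectivization ℂ (Fin n → ℂ) |
      ∃ d : Fin n → ℂ, ∃ hd : d ≠ 0,
        (∀ i j, d i * grad V d j = d j * grad V d i) ∧ p = Projectivization.mk ℂ d hd} ∧
    Set.Finite {d : Fin n → ℂ | d ≠ 0 ∧ grad V d = d} ∧
    (∀ d : Fin n → ℂ, d ≠ 0 → (∀ i j, d i * grad V d j = d j * grad V d i) →
      ∃ c : ℂ, c ≠ 0 ∧ grad V (fun i => c * d i) = fun i => c * d i) := by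
  set g : Fin n → MvPolynomial (Fin n) ℂ := fun i => pderiv i V with hgdef
  have hghom : ∀ i, (g i).IsHomogeneous (k - 1) := fun i => aux_pderiv_homog hV i
  -- Part 3 first
  have part3 : ∀ d : Fin n → ℂ, d ≠ 0 → (∀ i j, d i * grad V d j = d j * grad V d i) →
      ∃ c : ℂ, c ≠ 0 ∧ grad V (fun i => c * d i) = fun i => c * d i := by
    intro d hd hpar
    obtain ⟨i0, hi0⟩ : ∃ i0, d i0 ≠ 0 := by
      by_contra hcon
      push_neg at hcon
      exact hd (funext hcon)
    set lam := grad V d i0 / d i0 with hlam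
    have hgrad : ∀ j, grad V d j = lam * d j := by
      intro j
      have := hpar i0 j
      rw [hlam, div_mul_eq_mul_div, eq_div_iff hi0]
      linear_combination this
    have hlamne : lam ≠ 0 := by
      intro h0
      apply hd
      apply hproper
      funext j
      rw [hgrad j, h0, zero_mul]; rfl
    obtain ⟨c, hc⟩ := IsAlgClosed.exists_pow_nat_eq (k := ℂ) lam⁻¹ (n := k - 2) (by omega)
    have hcne : c ≠ 0 := by
      intro h0
      rw [h0] at hc
      rw [zero_pow (by omega)] at hc
      exact inv_ne_zero hlamne hc.symm
    refine ⟨c, hcne, ?_⟩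
    funext j
    have : grad V (fun i => c * d i) j = c ^ (k - 1) * grad V d j := by
      show eval (fun i => c * d i) (g j) = c ^ (k-1) * eval d (g j)
      exact aux_eval_smul (hghom j) c d
    rw [this, hgrad j]
    have hpow : c ^ (k - 1) = c * c ^ (k - 2) := by
      rw [← pow_succ']
      congr 1
      omega
    rw [hpow, hc]
    calc c * lam⁻¹ * (lam * d j) = c * (lam⁻¹ * lam) * d j := by ring
      _ = c * d j := by rw [inv_mul_cancel₀ hlamne]; ring
  -- Nullstellensatz and the finiteness of the normalized set
  set I : Ideal (MvPolynomial (Fin n) ℂ) := Ideal.span (Set.range g) with hI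
  have hX : ∀ j, (X j : MvPolynomial (Fin n) ℂ) ∈ I.radical := by
    intro j
    rw [← vanishingIdeal_zeroLocus_eq_radical (K := ℂ), mem_vanishingIdeal_iff]
    intro x hx
    have hx0 : x = 0 := by
      apply hproper
      funext i
      exact hx (g i) (Ideal.subset_span ⟨i, rfl⟩)
    rw [hx0]; simp
  obtain ⟨N, hkN, hNpos, hXN⟩ : ∃ N : ℕ, k - 1 ≤ N ∧ 0 < N ∧
      ∀ j, (X j : MvPolynomial (Fin n) ℂ) ^ N ∈ I := by
    choose Nj hNj using fun j => (hX j)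
    refine ⟨(Finset.univ.sup Nj) + k, by omega, by omega, fun j => ?_⟩
    have hle : Nj j ≤ Finset.univ.sup Nj + k := le_trans (Finset.le_sup (Finset.mem_univ j)) (by omega)
    have heq : (X j : MvPolynomial (Fin n) ℂ) ^ (Finset.univ.sup Nj + k)
        = X j ^ (Finset.univ.sup Nj + k - Nj j) * X j ^ (Nj j) := by
      rw [← pow_add]; congr 1; omega
    rw [heq]
    exact Ideal.mul_mem_left _ _ (hNj j)
  -- homogeneous cofactors
  have hHj : ∀ j, ∃ H : Fin n → MvPolynomial (Fin n) ℂ,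
      (∑ i, H i * g i) = X j ^ N ∧ ∀ i, (H i).totalDegree ≤ N - (k - 1) := by
    intro j
    obtain ⟨c, hc⟩ := Ideal.mem_span_range_iff_exists_fun.mp (hXN j)
    refine ⟨fun i => homogeneousComponent (N - (k - 1)) (c i), ?_, fun i =>
      aux_totalDegree_le (homogeneousComponent_isHomogeneous _ _)⟩
    have := congrArg (homogeneousComponent N) hc
    rw [map_sum] at this
    have hXmem : (X j : MvPolynomial (Fin n) ℂ) ^ N ∈ homogeneousSubmodule (Fin n) ℂ N := by
      rw [mem_homogeneousSubmodule]
      exact isHomogeneous_X_pow j N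
    rw [homogeneousComponent_of_mem hXmem, if_pos rfl] at this
    rw [← this]
    apply Finset.sum_congr rfl
    intro i _
    exact (aux_hc_mul (c i) (g i) (hghom i) hkN).symm
  choose H hH1 hH2 using hHj
  set R : Fin n → MvPolynomial (Fin n) ℂ := fun j => ∑ i, H j i * X i with hRdef
  have hRdeg : ∀ j, (R j).totalDegree ≤ N - (k - 1) + 1 := by
    intro j
    apply le_trans (totalDegree_finset_sum _ _)
    apply Finset.sup_le
    intro i _
    apply le_trans (totalDegree_mul _ _)
    have h1 : (X i : MvPolynomial (Fin n) ℂ).totalDegree = 1 := totalDegree_X i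
    have h2 := hH2 j i
    omega
  have hReval : ∀ d : Fin n → ℂ, grad V d = d → ∀ j, eval d (R j) = d j ^ N := by
    intro d hd j
    have hgd : ∀ i, eval d (g i) = d i := fun i => congrFun hd i
    have := congrArg (eval d) (hH1 j)
    rw [map_sum, map_pow, eval_X] at this
    rw [hRdef]
    rw [map_sum, ← this]
    apply Finset.sum_congr rfl
    intro i _
    rw [map_mul, map_mul, eval_X, hgd i]
  -- one-step reduction of a monomial
  have step : ∀ s : Fin n →₀ ℕ, ∃ q : MvPolynomial (Fin n) ℂ,
      (∀ d : Fin n → ℂ, grad V d = d → eval d q = eval d (monomial s 1)) ∧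
      (q.totalDegree ≤ n * N ∨ q.totalDegree + 1 ≤ s.degree) := by
    intro s
    by_cases hs : ∃ j, N ≤ s j
    · obtain ⟨j, hj⟩ := hs
      have hsplit : (s - Finsupp.single j N) + Finsupp.single j N = s := by
        ext i
        rcases eq_or_ne i j with rfl | hij
        · simp [Finsupp.sub_apply]; omega
        · simp [Finsupp.sub_apply, Finsupp.single_apply, Ne.symm hij]
      have hdegsub : (s - Finsupp.single j N).degree + N = s.degree := by
        have h3 := congrArg Finsupp.degree hsplit
        rw [Finsupp.degree_eq_weight_one] at h3 ⊢
        simp only [map_add] at h3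
        rw [← h3]
        congr 1
        simp [Finsupp.weight_apply]
      refine ⟨monomial (s - Finsupp.single j N) 1 * R j, ?_, Or.inr ?_⟩
      · intro d hd
        rw [map_mul, hReval d hd j]
        have hmono : (monomial s (1:ℂ)) = monomial (s - Finsupp.single j N) 1 * X j ^ N := by
          rw [X_pow_eq_monomial, monomial_mul, hsplit, one_mul]
        rw [hmono, map_mul, map_pow, eval_X]
      · have hdm : (monomial (s - Finsupp.single j N) (1:ℂ)).totalDegree
            ≤ (s - Finsupp.single j N).degree := by
          have h := totalDegree_monomial_le (s - Finsupp.single j N) (1:ℂ)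
          have h2 : ((s - Finsupp.single j N).sum fun _ => id)
              = (s - Finsupp.single j N).degree := by
            simp [Finsupp.degree, Finsupp.sum]
            rfl
          omega
        have hdr := hRdeg j
        have := totalDegree_mul (monomial (s - Finsupp.single j N) (1:ℂ)) (R j)
        omega
    · refine ⟨monomial s 1, fun d _ => rfl, Or.inl ?_⟩
      push_neg at hs
      have h1 : s.degree ≤ n * N := by
        have h2 : s.degree = ∑ i ∈ s.support, s i := rfl
        have h3 : ∑ i ∈ s.support, s i ≤ ∑ i : Fin n, s i :=
          Finset.sum_le_sum_of_subset (Finset.subset_univ _)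
        have h4 : ∑ i : Fin n, s i ≤ ∑ _i : Fin n, N :=
          Finset.sum_le_sum fun i _ => le_of_lt (hs i)
        have h5 : ∑ _i : Fin n, N = n * N := by
          rw [Finset.sum_const, Finset.card_univ, Fintype.card_fin, smul_eq_mul]
        omega
      exact le_trans (totalDegree_monomial_le s 1) h1
  -- reduce any polynomial to one of total degree ≤ n * N, modulo S
  have main : ∀ D : ℕ, ∀ P : MvPolynomial (Fin n) ℂ, P.totalDegree ≤ D →
      ∃ Q : MvPolynomial (Fin n) ℂ, Q.totalDegree ≤ n * N ∧
        ∀ d : Fin n → ℂ, grad V d = d → eval d P = eval d Q := by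
    intro D
    induction D with
    | zero =>
      intro P hP
      exact ⟨P, le_trans hP (Nat.zero_le _), fun d _ => rfl⟩
    | succ D ih =>
      intro P hP
      by_cases hPB : P.totalDegree ≤ n * N
      · exact ⟨P, hPB, fun d _ => rfl⟩
      · choose q hq1 hq2 using step
        set P' := ∑ s ∈ P.support, C (coeff s P) * q s with hP'def
        have hd1 : P'.totalDegree ≤ D := by
          apply le_trans (totalDegree_finset_sum _ _)
          apply Finset.sup_le
          intro s hs
          apply le_trans (totalDegree_mul _ _)
          have hC : (C (coeff s P) : MvPolynomial (Fin n) ℂ).totalDegree = 0 := totalDegree_C _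
          have hsd : s.degree ≤ P.totalDegree := by
            have h1 : (s.sum fun _ e => e) ≤ P.totalDegree := le_totalDegree hs
            have h2 : s.degree = s.sum fun _ e => e := by
              simp [Finsupp.degree, Finsupp.sum]
              rfl
            omega
          rcases hq2 s with h | h
          · omega
          · omega
        have hev : ∀ d : Fin n → ℂ, grad V d = d → eval d P = eval d P' := by
          intro d hd
          conv_lhs => rw [P.as_sum]
          rw [map_sum, hP'def, map_sum]
          apply Finset.sum_congr rfl
          intro s hs
          rw [map_mul, eval_C, hq1 s d hd]
          simp [eval_monomial]
        obtain ⟨Q, h1, h2⟩ := ih P' hd1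
        exact ⟨Q, h1, fun d hd => (hev d hd).trans (h2 d hd)⟩
  -- the dual-space argument
  set W := restrictTotalDegree (Fin n) ℂ (n * N) with hWdef
  have evsmul : ∀ (d : Fin n → ℂ) (c : ℂ) (p : MvPolynomial (Fin n) ℂ),
      eval d (c • p) = c * eval d p := by
    intro d c p
    rw [smul_eq_C_mul, map_mul, eval_C]
  set Φ : (Fin n → ℂ) → (W →ₗ[ℂ] ℂ) := fun d =>
    { toFun := fun Q => eval d (Q : MvPolynomial (Fin n) ℂ)
      map_add' := by intro a b; simp
      map_smul' := by intro c a; simp [evsmul] } with hΦdef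
  set S : Set (Fin n → ℂ) := {d : Fin n → ℂ | d ≠ 0 ∧ grad V d = d} with hSdef
  have hli : LinearIndependent ℂ (fun d : S => Φ d.1) := by
    rw [linearIndependent_iff']
    intro t c hsum d0 hd0
    have hzero : ∀ P : MvPolynomial (Fin n) ℂ, (∑ d ∈ t, c d * eval d.1 P) = 0 := by
      intro P
      obtain ⟨Q, hQdeg, hQ⟩ := main P.totalDegree P le_rfl
      have hQW : Q ∈ W := (mem_restrictTotalDegree _ _ _).mpr hQdeg
      have happ := LinearMap.congr_fun hsum ⟨Q, hQW⟩
      rw [LinearMap.sum_apply, LinearMap.zero_apply] at happ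
      rw [← happ]
      apply Finset.sum_congr rfl
      intro d hd
      rw [LinearMap.smul_apply]
      have : eval d.1 P = eval d.1 Q := hQ d.1 d.2.2
      rw [this]
      rfl
    -- separating polynomial
    classical
    set pick : S → MvPolynomial (Fin n) ℂ := fun d =>
      if h : ∃ i, d.1 i ≠ d0.1 i then
        (X h.choose - C (d.1 h.choose)) * C ((d0.1 h.choose - d.1 h.choose)⁻¹)
      else 1 with hpickdef
    set P0 : MvPolynomial (Fin n) ℂ := ∏ d ∈ t.erase d0, pick d with hP0def
    have hex : ∀ d : S, d ≠ d0 → ∃ i, d.1 i ≠ d0.1 i := by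
      intro d hne
      by_contra hcon
      push_neg at hcon
      exact hne (Subtype.ext (funext hcon))
    have heval0 : eval d0.1 P0 = 1 := by
      rw [hP0def, map_prod]
      apply Finset.prod_eq_one
      intro d hd
      have hne : d ≠ d0 := (Finset.mem_erase.mp hd).1
      have h := hex d hne
      rw [hpickdef]
      simp only [dif_pos h]
      rw [map_mul, map_sub, eval_X, eval_C, eval_C]
      exact mul_inv_cancel₀ (sub_ne_zero.mpr (Ne.symm h.choose_spec))
    have hevald : ∀ d ∈ t.erase d0, eval d.1 P0 = 0 := by
      intro d hd
      rw [hP0def, map_prod]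
      apply Finset.prod_eq_zero hd
      have hne : d ≠ d0 := (Finset.mem_erase.mp hd).1
      have h := hex d hne
      rw [hpickdef]
      simp only [dif_pos h]
      rw [map_mul, map_sub, eval_X, eval_C]
      simp
    have := hzero P0
    rw [← Finset.add_sum_erase _ _ hd0] at this
    rw [Finset.sum_eq_zero (fun d hd => by rw [hevald d hd, mul_zero])] at this
    rw [heval0, mul_one, add_zero] at this
    exact this
  have hSfin : S.Finite := by
    have : Finite S := hli.finite
    exact Set.finite_coe_iff.mp this
  have hproj : Set.Finite {p : Projectivization ℂ (Fin n → ℂ) |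
      ∃ d : Fin n → ℂ, ∃ hd : d ≠ 0,
        (∀ i j, d i * grad V d j = d j * grad V d i) ∧ p = Projectivization.mk ℂ d hd} := by
    apply Set.Finite.subset (hSfin.biUnion (t := fun e =>
      {p : Projectivization ℂ (Fin n → ℂ) | ∃ he : e ≠ 0, p = Projectivization.mk ℂ e he})
      (fun e _ => Set.Subsingleton.finite (by
        rintro p ⟨hp1, rfl⟩ q ⟨hq1, rfl⟩
        rfl)))
    rintro p ⟨d, hd, hpar, rfl⟩
    obtain ⟨c, hc, hfix⟩ := part3 d hd hpar
    have hene : (fun i => c * d i) ≠ 0 := by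
      intro h
      apply hd
      funext i
      have := congrFun h i
      simp only [Pi.zero_apply] at this ⊢
      exact (mul_eq_zero.mp this).resolve_left hc
    refine Set.mem_biUnion (show (fun i => c * d i) ∈ S from ⟨hene, hfix⟩) ?_
    refine ⟨hene, ?_⟩
    rw [Projectivization.mk_eq_mk_iff]
    refine ⟨(Units.mk0 c hc)⁻¹, ?_⟩
    funext i
    show ((Units.mk0 c hc)⁻¹ : ℂˣ) • (c * d i) = d i
    rw [Units.smul_def]
    simp
    field_simp
  exact ⟨hproj, hSfin, part3⟩
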